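/- Let v, ω₁, ω₂ be weights with σ_i = ω_i^{-1/(p_i - 1)} ∈ L¹, 1 < p₁, p₂ < ∞, 1/p = 1/p₁ + 1/p₂. If the triple (v, ω₁, ω₂) satisfies the bilinear martingale A_{p⃗} condition sup_n E_n(v)^{1/p} E_n(ω₁^{1-p₁'})^{1/p₁'} E_n(ω₂^{1-p₂'})^{1/p₂'} ≤ C, then the pointwise domination M(f,g) ≤ C' M^v(f^{p₁} ω₁ v^{-1})^{1/p₁} M^v(g^{p₂} ω₂ v^{-1})^{1/p₂} holds, where M^v denotes the martingale maximal operator with respect to the probability measure proportional to v dμ. -/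

import Mathlib

open MeasureTheory Filter ENNReal Topology

noncomputable section

/-- Bridge: an inequality valid at rational points extends to all positive reals by continuity. -/
lemma rat_to_real_young {E A B p q : ℝ} (hp : 0 < p) (hq : 0 < q)
    (h : ∀ t : ℚ, 0 < (t : ℝ) → E ≤ (t : ℝ) ^ p * A / p + (t : ℝ) ^ (-q) * B / q) :
    ∀ t : ℝ, 0 < t → E ≤ t ^ p * A / p + t ^ (-q) * B / q := by
  intro t ht
  set F : ℝ → ℝ := fun s => s ^ p * A / p + s ^ (-q) * B / q with hF
  have hcont : ContinuousAt F t := by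
    have h1 : ContinuousAt (fun s : ℝ => s ^ p) t :=
      Real.continuousAt_rpow_const t p (Or.inl ht.ne')
    have h2 : ContinuousAt (fun s : ℝ => s ^ (-q)) t :=
      Real.continuousAt_rpow_const t (-q) (Or.inl ht.ne')
    exact ((h1.mul continuousAt_const).div_const p).add
      ((h2.mul continuousAt_const).div_const q)
  have hdense : DenseRange ((↑) : ℚ → ℝ) := Rat.denseRange_cast
  have hne : (𝓝[Set.range ((↑) : ℚ → ℝ)] t).NeBot := hdense.nhdsWithin_neBot t
  have htend : Tendsto F (𝓝[Set.range ((↑) : ℚ → ℝ)] t) (𝓝 (F t)) :=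
    hcont.continuousWithinAt.tendsto
  refine ge_of_tendsto htend ?_
  have hmem : ∀ᶠ s in 𝓝[Set.range ((↑) : ℚ → ℝ)] t, s ∈ Set.range ((↑) : ℚ → ℝ) :=
    eventually_mem_nhdsWithin
  have hpos : ∀ᶠ s in 𝓝[Set.range ((↑) : ℚ → ℝ)] t, 0 < s :=
    eventually_nhdsWithin_of_eventually_nhds (eventually_gt_nhds ht)
  filter_upwards [hmem, hpos] with s hs hs0
  obtain ⟨r, rfl⟩ := hs
  exact h r hs0

/-- Optimizing Young's inequality over `t` yields the Hölder form. -/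
lemma young_opt {E A B p q : ℝ} (hpq : Real.HolderConjugate p q) (hA : 0 ≤ A) (hB : 0 ≤ B)
    (h : ∀ t : ℝ, 0 < t → E ≤ t ^ p * A / p + t ^ (-q) * B / q) :
    E ≤ A ^ (1 / p) * B ^ (1 / q) := by
  have hp := hpq.pos
  have hq := hpq.symm.pos
  have hsum : 1 / p + 1 / q = 1 := by
    rw [one_div, one_div]; exact hpq.inv_add_inv_eq_one
  rcases eq_or_lt_of_le hA with hA0 | hApos
  · have hrhs : A ^ (1 / p) * B ^ (1 / q) = 0 := by
      rw [← hA0, Real.zero_rpow (by positivity : (1:ℝ)/p ≠ 0), zero_mul]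
    rw [hrhs]
    refine le_of_forall_pos_le_add fun ε hε => ?_
    rcases eq_or_lt_of_le hB with hB0 | hBpos
    · have h1 := h 1 one_pos
      rw [← hA0, ← hB0] at h1
      simp only [mul_zero, zero_div, add_zero] at h1
      linarith
    · set t : ℝ := (B / (q * ε)) ^ (1 / q) with hT
      have hbase : 0 < B / (q * ε) := by positivity
      have htpos : 0 < t := Real.rpow_pos_of_pos hbase _
      have hval : t ^ (-q) = q * ε / B := by
        rw [hT, ← Real.rpow_mul hbase.le,
          show 1 / q * (-q) = (-1 : ℝ) by field_simp,
          Real.rpow_neg_one, inv_div]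
      have := h t htpos
      rw [← hA0, mul_zero, zero_div, zero_add, hval] at this
      calc E ≤ q * ε / B * B / q := this
        _ = ε := by field_simp
        _ ≤ 0 + ε := by linarith
  · rcases eq_or_lt_of_le hB with hB0 | hBpos
    · have hrhs : A ^ (1 / p) * B ^ (1 / q) = 0 := by
        rw [← hB0, Real.zero_rpow (by positivity : (1:ℝ)/q ≠ 0), mul_zero]
      rw [hrhs]
      refine le_of_forall_pos_le_add fun ε hε => ?_
      set t : ℝ := (p * ε / A) ^ (1 / p) with hT
      have hbase : 0 < p * ε / A := by positivity
      have htpos : 0 < t := Real.rpow_pos_of_pos hbase _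
      have hval : t ^ p = p * ε / A := by
        rw [hT, ← Real.rpow_mul hbase.le, one_div_mul_cancel hp.ne', Real.rpow_one]
      have := h t htpos
      rw [← hB0, mul_zero, zero_div, add_zero, hval] at this
      calc E ≤ p * ε / A * A / p := this
        _ = ε := by field_simp
        _ ≤ 0 + ε := by linarith
    · -- A, B > 0 : optimal t
      set t : ℝ := (B / A) ^ (1 / (p + q)) with hT
      have hba : 0 < B / A := by positivity
      have htpos : 0 < t := Real.rpow_pos_of_pos hba _
      have hpqs : 0 < p + q := by linarith
      have hmul : p * q = p + q := hpq.mul_eq_add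
      have h1 : t ^ p = (B / A) ^ (1 / q) := by
        rw [hT, ← Real.rpow_mul hba.le]
        congr 1
        field_simp
        linarith [hmul]
      have h2 : t ^ (-q) = (A / B) ^ (1 / p) := by
        rw [hT, ← Real.rpow_mul hba.le,
          show 1 / (p + q) * (-q) = -(q / (p + q)) by ring,
          show q / (p + q) = 1 / p by rw [← hmul]; field_simp,
          Real.rpow_neg hba.le, ← Real.inv_rpow hba.le, inv_div]
      have e1 : t ^ p * A = A ^ (1 / p) * B ^ (1 / q) := by
        rw [h1, Real.div_rpow hB hA]
        have key : A ^ (1:ℝ) / A ^ (1/q) = A ^ ((1:ℝ) - 1/q) := (Real.rpow_sub hApos 1 (1/q)).symm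
        calc B ^ (1/q) / A ^ (1/q) * A = B ^ (1/q) * (A ^ (1:ℝ) / A ^ (1/q)) := by
              rw [Real.rpow_one]; ring
          _ = B ^ (1/q) * A ^ (1/p) := by
              rw [key, show (1:ℝ) - 1/q = 1/p by linarith]
          _ = A ^ (1/p) * B ^ (1/q) := mul_comm _ _
      have e2 : t ^ (-q) * B = A ^ (1 / p) * B ^ (1 / q) := by
        rw [h2, Real.div_rpow hA hB]
        have key : B ^ (1:ℝ) / B ^ (1/p) = B ^ ((1:ℝ) - 1/p) := (Real.rpow_sub hBpos 1 (1/p)).symm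
        calc A ^ (1/p) / B ^ (1/p) * B = A ^ (1/p) * (B ^ (1:ℝ) / B ^ (1/p)) := by
              rw [Real.rpow_one]; ring
          _ = A ^ (1/p) * B ^ (1/q) := by
              rw [key, show (1:ℝ) - 1/p = 1/q by linarith]
      have := h t htpos
      rw [e1, e2] at this
      set R := A ^ (1/p) * B ^ (1/q)
      calc E ≤ R / p + R / q := this
        _ = R * (1 / p + 1 / q) := by ring
        _ = R := by rw [hsum, mul_one]

/-- Conditional Hölder inequality. -/
lemma condexp_holder {Ω : Type*} {m m0 : MeasurableSpace Ω}
    {μ : Measure Ω} [IsFiniteMeasure μ] (hm : m ≤ m0)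
    {φ ψ : Ω → ℝ} {p q : ℝ} (hpq : Real.HolderConjugate p q)
    (hφ : ∀ x, 0 ≤ φ x) (hψ : ∀ x, 0 ≤ ψ x)
    (h1 : Integrable (fun x => φ x * ψ x) μ)
    (hIp : Integrable (fun x => φ x ^ p) μ) (hIq : Integrable (fun x => ψ x ^ q) μ) :
    ∀ᵐ x ∂μ, (μ[fun x => φ x * ψ x|m]) x ≤
      (μ[fun x => φ x ^ p|m]) x ^ (1/p) * (μ[fun x => ψ x ^ q|m]) x ^ (1/q) := by
  have hp := hpq.pos
  have hq := hpq.symm.pos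
  have key : ∀ t : ℚ, ∀ᵐ x ∂μ, 0 < (t:ℝ) →
      (μ[fun x => φ x * ψ x|m]) x ≤
        (t:ℝ) ^ p * (μ[fun x => φ x ^ p|m]) x / p
          + (t:ℝ) ^ (-q) * (μ[fun x => ψ x ^ q|m]) x / q := by
    intro t
    by_cases ht : 0 < (t:ℝ)
    swap
    · exact Eventually.of_forall fun x h => absurd h ht
    -- pointwise Young with parameter t
    set c₁ : ℝ := (t:ℝ) ^ p / p with hc₁
    set c₂ : ℝ := (t:ℝ) ^ (-q) / q with hc₂
    have hyoung : ∀ x, φ x * ψ x ≤ c₁ * φ x ^ p + c₂ * ψ x ^ q := by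
      intro x
      have h0 := Real.young_inequality_of_nonneg
        (mul_nonneg ht.le (hφ x)) (div_nonneg (hψ x) ht.le) hpq
      have e0 : (t:ℝ) * φ x * (ψ x / (t:ℝ)) = φ x * ψ x := by
        field_simp
      have e1 : ((t:ℝ) * φ x) ^ p = (t:ℝ) ^ p * φ x ^ p :=
        Real.mul_rpow ht.le (hφ x)
      have e2 : (ψ x / (t:ℝ)) ^ q = (t:ℝ) ^ (-q) * ψ x ^ q := by
        rw [Real.div_rpow (hψ x) ht.le, Real.rpow_neg ht.le, div_eq_mul_inv, mul_comm]
      rw [e0, e1, e2] at h0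
      calc φ x * ψ x ≤ (t:ℝ) ^ p * φ x ^ p / p + (t:ℝ) ^ (-q) * ψ x ^ q / q := h0
        _ = c₁ * φ x ^ p + c₂ * ψ x ^ q := by rw [hc₁, hc₂]; ring
    have hIrhs : Integrable (fun x => c₁ * φ x ^ p + c₂ * ψ x ^ q) μ :=
      (hIp.const_mul c₁).add (hIq.const_mul c₂)
    have hmono := condExp_mono (m := m) h1 hIrhs (Eventually.of_forall hyoung)
    have hadd : μ[fun x => c₁ * φ x ^ p + c₂ * ψ x ^ q|m]
        =ᵐ[μ] fun x => c₁ * (μ[fun x => φ x ^ p|m]) x + c₂ * (μ[fun x => ψ x ^ q|m]) x := by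
      have h3 := condExp_add (μ := μ) (m := m) (hIp.const_mul c₁) (hIq.const_mul c₂)
      have h4 := condExp_smul (μ := μ) (m := m) c₁ (fun x => φ x ^ p)
      have h5 := condExp_smul (μ := μ) (m := m) c₂ (fun x => ψ x ^ q)
      filter_upwards [h3, h4, h5] with x hx3 hx4 hx5
      have e4 : (μ[fun x => c₁ * φ x ^ p|m]) x = c₁ * (μ[fun x => φ x ^ p|m]) x := by
        have : (fun x => c₁ * φ x ^ p) = c₁ • (fun x => φ x ^ p) := rfl
        rw [this, hx4]; rfl
      have e5 : (μ[fun x => c₂ * ψ x ^ q|m]) x = c₂ * (μ[fun x => ψ x ^ q|m]) x := by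
        have : (fun x => c₂ * ψ x ^ q) = c₂ • (fun x => ψ x ^ q) := rfl
        rw [this, hx5]; rfl
      have hfun : (fun x => c₁ * φ x ^ p + c₂ * ψ x ^ q)
          = (fun x => c₁ * φ x ^ p) + fun x => c₂ * ψ x ^ q := rfl
      rw [hfun, hx3]; simp only [Pi.add_apply, e4, e5]
    filter_upwards [hmono, hadd] with x hx1 hx2 _
    rw [hx2] at hx1
    calc (μ[fun x => φ x * ψ x|m]) x ≤ c₁ * (μ[fun x => φ x ^ p|m]) x
          + c₂ * (μ[fun x => ψ x ^ q|m]) x := hx1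
      _ = (t:ℝ) ^ p * (μ[fun x => φ x ^ p|m]) x / p
          + (t:ℝ) ^ (-q) * (μ[fun x => ψ x ^ q|m]) x / q := by rw [hc₁, hc₂]; ring
  have hAnn : ∀ᵐ x ∂μ, 0 ≤ (μ[fun x => φ x ^ p|m]) x :=
    condExp_nonneg (Eventually.of_forall fun x => Real.rpow_nonneg (hφ x) p)
  have hBnn : ∀ᵐ x ∂μ, 0 ≤ (μ[fun x => ψ x ^ q|m]) x :=
    condExp_nonneg (Eventually.of_forall fun x => Real.rpow_nonneg (hψ x) q)
  filter_upwards [(ae_all_iff).2 key, hAnn, hBnn] with x hx hA hB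
  exact young_opt hpq hA hB (rat_to_real_young hp hq hx)

/-- The conditional expectation of an everywhere-positive integrable function is a.e. positive. -/
lemma condexp_pos_ae {Ω : Type*} {m m0 : MeasurableSpace Ω}
    {μ : Measure Ω} [IsFiniteMeasure μ] (hm : m ≤ m0)
    {v : Ω → ℝ} (hv : ∀ x, 0 < v x) (hvI : Integrable v μ) :
    ∀ᵐ x ∂μ, 0 < (μ[v|m]) x := by
  set s : Set Ω := {x | (μ[v|m]) x ≤ 0} with hs_def
  have hsm : MeasurableSet[m] s :=
    measurableSet_le (stronglyMeasurable_condExp (μ := μ) (f := v)).measurable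
      measurable_const
  have hsm0 : MeasurableSet[m0] s := hm _ hsm
  have hint : ∫ x in s, (μ[v|m]) x ∂μ = ∫ x in s, v x ∂μ :=
    setIntegral_condExp hm hvI hsm
  have hle : ∫ x in s, (μ[v|m]) x ∂μ ≤ 0 :=
    setIntegral_nonpos hsm0 (fun x hx => hx)
  have hge : 0 ≤ ∫ x in s, v x ∂μ :=
    setIntegral_nonneg hsm0 fun x _ => (hv x).le
  have hzero : ∫ x in s, v x ∂μ = 0 := le_antisymm (by rw [← hint]; exact hle) hge
  have hv0 : v =ᵐ[μ.restrict s] 0 :=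
    (integral_eq_zero_iff_of_nonneg_ae (Eventually.of_forall fun x => (hv x).le)
      hvI.integrableOn).mp hzero
  have hμs : μ s = 0 := by
    have : (μ.restrict s) {x | ¬ v x = (0:ℝ)} = 0 := hv0
    have huniv : {x | ¬ v x = (0:ℝ)} = Set.univ := by
      ext x; simp [(hv x).ne']
    rw [huniv, Measure.restrict_apply_univ] at this
    exact this
  have : ∀ᵐ x ∂μ, x ∉ s := by
    rw [ae_iff]
    simpa using hμs
  filter_upwards [this] with x hx
  simpa [hs_def] using lt_of_not_ge hx

/-- Key identity: the conditional expectation w.r.t. the normalized `v`-weighted measure,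
multiplied by `μ[v|m]`, recovers `μ[H|m]`. -/
lemma condexp_withDensity_mul {Ω : Type*} {m m0 : MeasurableSpace Ω}
    {μ : Measure Ω} [IsProbabilityMeasure μ] (hm : m ≤ m0)
    {v : Ω → ℝ} (hv : ∀ x, 0 < v x) (hvI : Integrable v μ)
    {H : Ω → ℝ} (hHI : Integrable H μ) :
    (fun x => (((ENNReal.ofReal (∫ y, v y ∂μ))⁻¹ •
        μ.withDensity fun y => ENNReal.ofReal (v y))[fun y => H y / v y|m]) x * (μ[v|m]) x)
      =ᵐ[μ] μ[H|m] := by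
  set c : ℝ := ∫ y, v y ∂μ with hc_def
  have hc : 0 < c := by
    rw [hc_def, integral_pos_iff_support_of_nonneg (fun x => (hv x).le) hvI]
    have : Function.support v = Set.univ := by
      ext x; simp [Function.support, (hv x).ne']
    rw [this]
    simp
  have hcne : ENNReal.ofReal c ≠ 0 := (ENNReal.ofReal_pos.mpr hc).ne'
  have hctop : ENNReal.ofReal c ≠ ⊤ := ENNReal.ofReal_ne_top
  set ν : Measure Ω := (ENNReal.ofReal c)⁻¹ • μ.withDensity fun y => ENNReal.ofReal (v y)
    with hν_def
  have hvmeas : AEMeasurable (fun x => (v x).toNNReal) μ :=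
    measurable_real_toNNReal.comp_aemeasurable hvI.aemeasurable
  have hdens : (fun y => ENNReal.ofReal (v y)) = fun y => ((v y).toNNReal : ℝ≥0∞) :=
    rfl
  -- integrability transfer
  have hInt_iff : ∀ G : Ω → ℝ, Integrable G ν ↔ Integrable (fun x => v x * G x) μ := by
    intro G
    rw [hν_def, integrable_smul_measure (by simpa using hctop) (by simpa using hcne), hdens,
      integrable_withDensity_iff_integrable_smul₀ hvmeas]
    refine integrable_congr (Eventually.of_forall fun x => ?_)
    simp [NNReal.smul_def, Real.coe_toNNReal _ (hv x).le]
  -- set-integral transfer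
  have hSetInt : ∀ (G : Ω → ℝ) (s : Set Ω), MeasurableSet[m0] s →
      ∫ x in s, G x ∂ν = c⁻¹ * ∫ x in s, v x * G x ∂μ := by
    intro G s hs
    rw [hν_def, Measure.restrict_smul, integral_smul_measure, hdens,
      setIntegral_withDensity_eq_setIntegral_smul₀ hvmeas.restrict G hs,
      ENNReal.toReal_inv, ENNReal.toReal_ofReal hc.le, smul_eq_mul]
    congr 1
    refine setIntegral_congr_ae hs (Eventually.of_forall fun x _ => ?_)
    simp [NNReal.smul_def, Real.coe_toNNReal _ (hv x).le]
  have hνprob : IsProbabilityMeasure ν := by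
    constructor
    rw [hν_def, Measure.smul_apply, withDensity_apply _ MeasurableSet.univ,
      Measure.restrict_univ, smul_eq_mul]
    rw [← ofReal_integral_eq_lintegral_ofReal hvI (Eventually.of_forall fun x => (hv x).le)]
    exact ENNReal.inv_mul_cancel hcne hctop
  haveI := hνprob
  set f₁ : Ω → ℝ := ν[fun y => H y / v y|m] with hf₁_def
  have hf₁SM : StronglyMeasurable[m] f₁ := stronglyMeasurable_condExp
  have hHv : Integrable (fun y => H y / v y) ν := by
    rw [hInt_iff]
    refine (integrable_congr (Eventually.of_forall fun x => ?_)).mpr hHI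
    rw [mul_comm]; exact div_mul_cancel₀ _ (hv x).ne'
  have hf₁v : Integrable (fun x => f₁ x * v x) μ := by
    have h1 : Integrable (fun x => v x * f₁ x) μ := (hInt_iff f₁).mp integrable_condExp
    exact (integrable_congr (Eventually.of_forall fun x => mul_comm (v x) (f₁ x))).mp h1
  have step1 : μ[fun x => f₁ x * v x|m] =ᵐ[μ] fun x => f₁ x * (μ[v|m]) x := by
    have := condExp_mul_of_stronglyMeasurable_left (μ := μ) hf₁SM
      (show Integrable (f₁ * v) μ from hf₁v) hvI
    exact this
  have step2 : μ[fun x => f₁ x * v x|m] =ᵐ[μ] μ[H|m] := by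
    refine ae_eq_condExp_of_forall_setIntegral_eq hm hHI
      (fun s _ _ => integrable_condExp.integrableOn) (fun s hs _ => ?_)
      stronglyMeasurable_condExp.aestronglyMeasurable
    have hs0 : MeasurableSet[m0] s := hm _ hs
    rw [setIntegral_condExp hm hf₁v hs]
    have e1 : ∫ x in s, f₁ x * v x ∂μ = ∫ x in s, v x * f₁ x ∂μ :=
      setIntegral_congr_ae hs0 (Eventually.of_forall fun x _ => mul_comm _ _)
    have e2 : ∫ x in s, f₁ x ∂ν = c⁻¹ * ∫ x in s, v x * f₁ x ∂μ := hSetInt f₁ s hs0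
    have e3 : ∫ x in s, f₁ x ∂ν = ∫ x in s, H x / v x ∂ν :=
      setIntegral_condExp hm hHv hs
    have e4 : ∫ x in s, H x / v x ∂ν = c⁻¹ * ∫ x in s, v x * (H x / v x) ∂μ :=
      hSetInt _ s hs0
    have e5 : ∫ x in s, v x * (H x / v x) ∂μ = ∫ x in s, H x ∂μ :=
      setIntegral_congr_ae hs0 (Eventually.of_forall fun x _ => by
        rw [mul_comm]; exact div_mul_cancel₀ _ (hv x).ne')
    have := e2.symm.trans (e3.trans (e4.trans (by rw [e5])))
    -- this : c⁻¹ * ∫ x in s, v x * f₁ x ∂μ = c⁻¹ * ∫ x in s, H x ∂μ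
    rw [e1]
    have hcc : c⁻¹ ≠ 0 := inv_ne_zero hc.ne'
    exact mul_left_cancel₀ hcc this
  exact step1.symm.trans step2

/-- Pointwise combination of the Hölder bounds with the Aₚ condition. -/
lemma final_calc {Ef Eg A B F G V S₁ S₂ C p p₁ p₂ a b : ℝ}
    (hp : 1 / p = 1 / p₁ + 1 / p₂)
    (hV : 0 < V) (hS₁ : 0 ≤ S₁) (hS₂ : 0 ≤ S₂) (hF : 0 ≤ F) (hG : 0 ≤ G)
    (hAB : F * V = A) (hBB : G * V = B)
    (h1 : |Ef| ≤ A ^ (1 / p₁) * S₁ ^ a)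
    (h2 : |Eg| ≤ B ^ (1 / p₂) * S₂ ^ b)
    (hCa : V ^ (1 / p) * S₁ ^ a * S₂ ^ b ≤ C) :
    |Ef| * |Eg| ≤ C * F ^ (1 / p₁) * G ^ (1 / p₂) := by
  have hAnn : 0 ≤ A := hAB ▸ mul_nonneg hF hV.le
  have hBnn : 0 ≤ B := hBB ▸ mul_nonneg hG hV.le
  have eA : A ^ (1/p₁) = F ^ (1/p₁) * V ^ (1/p₁) := by
    rw [← hAB, Real.mul_rpow hF hV.le]
  have eB : B ^ (1/p₂) = G ^ (1/p₂) * V ^ (1/p₂) := by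
    rw [← hBB, Real.mul_rpow hG hV.le]
  have eV : V ^ (1/p₁) * V ^ (1/p₂) = V ^ (1/p) := by
    rw [← Real.rpow_add hV, ← hp]
  calc |Ef| * |Eg| ≤ (A ^ (1/p₁) * S₁ ^ a) * (B ^ (1/p₂) * S₂ ^ b) :=
        mul_le_mul h1 h2 (abs_nonneg _)
          (mul_nonneg (Real.rpow_nonneg hAnn _) (Real.rpow_nonneg hS₁ _))
    _ = (F ^ (1/p₁) * G ^ (1/p₂)) * ((V ^ (1/p₁) * V ^ (1/p₂)) * S₁ ^ a * S₂ ^ b) := by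
        rw [eA, eB]; ring
    _ = (F ^ (1/p₁) * G ^ (1/p₂)) * (V ^ (1/p) * S₁ ^ a * S₂ ^ b) := by rw [eV]
    _ ≤ (F ^ (1/p₁) * G ^ (1/p₂)) * C :=
        mul_le_mul_of_nonneg_left hCa
          (mul_nonneg (Real.rpow_nonneg hF _) (Real.rpow_nonneg hG _))
    _ = C * F ^ (1/p₁) * G ^ (1/p₂) := by ring

theorem stmt_2
    {Ω : Type*} {m0 : MeasurableSpace Ω} {μ : Measure Ω} [IsProbabilityMeasure μ]
    (ℱ : Filtration ℕ m0)
    (v ω₁ ω₂ : Ω → ℝ)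
    (hv : ∀ x, 0 < v x) (hω₁ : ∀ x, 0 < ω₁ x) (hω₂ : ∀ x, 0 < ω₂ x)
    (hvI : Integrable v μ) (hω₁I : Integrable ω₁ μ) (hω₂I : Integrable ω₂ μ)
    (p p₁ p₂ C : ℝ) (hp₁ : 1 < p₁) (hp₂ : 1 < p₂)
    (hp : 1 / p = 1 / p₁ + 1 / p₂) (hC : 0 < C)
    (hσ₁I : Integrable (fun x => ω₁ x ^ (-(1 / (p₁ - 1)))) μ)
    (hσ₂I : Integrable (fun x => ω₂ x ^ (-(1 / (p₂ - 1)))) μ)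
    (hA : ∀ n : ℕ, ∀ᵐ x ∂μ,
      (μ[v|ℱ n]) x ^ (1 / p)
        * (μ[fun y => ω₁ y ^ (-(1 / (p₁ - 1)))|ℱ n]) x ^ ((p₁ - 1) / p₁)
        * (μ[fun y => ω₂ y ^ (-(1 / (p₂ - 1)))|ℱ n]) x ^ ((p₂ - 1) / p₂) ≤ C) :
    ∃ C' : ℝ, 0 < C' ∧
      ∀ f g : Ω → ℝ, Integrable f μ →
        Integrable (fun x => |f x| ^ p₁ * ω₁ x) μ →
        Integrable g μ →
        Integrable (fun x => |g x| ^ p₂ * ω₂ x) μ →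
        ∀ᵐ x ∂μ,
          (⨆ n, ENNReal.ofReal (|(μ[f|ℱ n]) x| * |(μ[g|ℱ n]) x|))
            ≤ ENNReal.ofReal C'
              * (⨆ n, ENNReal.ofReal
                  |((((ENNReal.ofReal (∫ y, v y ∂μ))⁻¹ •
                      μ.withDensity fun y => ENNReal.ofReal (v y))[fun y =>
                        |f y| ^ p₁ * ω₁ y / v y|ℱ n]) x)|) ^ (1 / p₁)
              * (⨆ n, ENNReal.ofReal
                  |((((ENNReal.ofReal (∫ y, v y ∂μ))⁻¹ •
                      μ.withDensity fun y => ENNReal.ofReal (v y))[fun y =>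
                        |g y| ^ p₂ * ω₂ y / v y|ℱ n]) x)|) ^ (1 / p₂) := by
  refine ⟨C, hC, fun f g hfI hfω hgI hgω => ?_⟩
  set ν : Measure Ω :=
    (ENNReal.ofReal (∫ y, v y ∂μ))⁻¹ • μ.withDensity fun y => ENNReal.ofReal (v y) with hν_def
  have hp₁0 : 0 < p₁ := lt_trans one_pos hp₁
  have hp₂0 : 0 < p₂ := lt_trans one_pos hp₂
  have hq₁ : p₁.HolderConjugate (p₁ / (p₁ - 1)) := Real.HolderConjugate.conjExponent hp₁
  have hq₂ : p₂.HolderConjugate (p₂ / (p₂ - 1)) := Real.HolderConjugate.conjExponent hp₂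
  -- the per-n a.e. bound
  have hmain : ∀ n : ℕ, ∀ᵐ x ∂μ,
      |(μ[f|ℱ n]) x| * |(μ[g|ℱ n]) x| ≤
        C * ((ν[fun y => |f y| ^ p₁ * ω₁ y / v y|ℱ n]) x) ^ (1/p₁)
          * ((ν[fun y => |g y| ^ p₂ * ω₂ y / v y|ℱ n]) x) ^ (1/p₂)
        ∧ 0 ≤ (ν[fun y => |f y| ^ p₁ * ω₁ y / v y|ℱ n]) x
        ∧ 0 ≤ (ν[fun y => |g y| ^ p₂ * ω₂ y / v y|ℱ n]) x := by
    intro n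
    have hm := ℱ.le n
    -- |E f| ≤ E |f| and similarly for g
    have habsf : ∀ᵐ x ∂μ, |(μ[f|ℱ n]) x| ≤ (μ[fun x => abs (f x)|ℱ n]) x := by
      have m1 := condExp_mono (m := ℱ n) hfI hfI.abs
        (Eventually.of_forall fun x => le_abs_self (f x))
      have m2 := condExp_mono (m := ℱ n) hfI.neg hfI.abs
        (Eventually.of_forall fun x => neg_le_abs (f x))
      have e1 := condExp_neg (μ := μ) (m := ℱ n) f
      filter_upwards [m1, m2, e1] with x h1 h2 h3
      have : -(μ[f|ℱ n]) x ≤ (μ[fun x => abs (f x)|ℱ n]) x := by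
        have := h2; rw [h3] at this; simpa using this
      exact abs_le.mpr ⟨by linarith, h1⟩
    have habsg : ∀ᵐ x ∂μ, |(μ[g|ℱ n]) x| ≤ (μ[fun x => abs (g x)|ℱ n]) x := by
      have m1 := condExp_mono (m := ℱ n) hgI hgI.abs
        (Eventually.of_forall fun x => le_abs_self (g x))
      have m2 := condExp_mono (m := ℱ n) hgI.neg hgI.abs
        (Eventually.of_forall fun x => neg_le_abs (g x))
      have e1 := condExp_neg (μ := μ) (m := ℱ n) g
      filter_upwards [m1, m2, e1] with x h1 h2 h3
      have : -(μ[g|ℱ n]) x ≤ (μ[fun x => abs (g x)|ℱ n]) x := by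
        have := h2; rw [h3] at this; simpa using this
      exact abs_le.mpr ⟨by linarith, h1⟩
    -- conditional Hölder for f
    have hholf : ∀ᵐ x ∂μ, (μ[fun x => abs (f x)|ℱ n]) x ≤
        (μ[fun x => |f x| ^ p₁ * ω₁ x|ℱ n]) x ^ (1/p₁)
          * (μ[fun y => ω₁ y ^ (-(1 / (p₁ - 1)))|ℱ n]) x ^ ((p₁ - 1)/p₁) := by
      set φ : Ω → ℝ := fun x => |f x| * ω₁ x ^ (1/p₁) with hφ_def
      set ψ : Ω → ℝ := fun x => ω₁ x ^ (-(1/p₁)) with hψ_def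
      have cφψ : (fun x => φ x * ψ x) = fun x => |f x| := by
        funext x
        rw [hφ_def, hψ_def]
        simp only
        rw [mul_assoc, ← Real.rpow_add (hω₁ x)]
        simp
      have cφp : (fun x => φ x ^ p₁) = fun x => |f x| ^ p₁ * ω₁ x := by
        funext x
        rw [hφ_def]
        simp only
        rw [Real.mul_rpow (abs_nonneg _) (Real.rpow_nonneg (hω₁ x).le _),
          ← Real.rpow_mul (hω₁ x).le, one_div_mul_cancel hp₁0.ne', Real.rpow_one]
      have cψq : (fun x => ψ x ^ (p₁ / (p₁ - 1))) = fun y => ω₁ y ^ (-(1 / (p₁ - 1))) := by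
        funext x
        rw [hψ_def]
        simp only
        rw [← Real.rpow_mul (hω₁ x).le]
        congr 1
        field_simp
      have h1 : Integrable (fun x => φ x * ψ x) μ := by rw [cφψ]; exact hfI.abs
      have hIp : Integrable (fun x => φ x ^ p₁) μ := by rw [cφp]; exact hfω
      have hIq : Integrable (fun x => ψ x ^ (p₁ / (p₁ - 1))) μ := by rw [cψq]; exact hσ₁I
      have hφ0 : ∀ x, 0 ≤ φ x := fun x => mul_nonneg (abs_nonneg _)
        (Real.rpow_nonneg (hω₁ x).le _)
      have hψ0 : ∀ x, 0 ≤ ψ x := fun x => Real.rpow_nonneg (hω₁ x).le _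
      have := condexp_holder (m0 := m0) (m := ℱ n) (μ := μ) (φ := φ) (ψ := ψ) hm hq₁ hφ0 hψ0 h1 hIp hIq
      rw [cφψ, cφp, cψq] at this
      have hqe : 1 / (p₁ / (p₁ - 1)) = (p₁ - 1) / p₁ := one_div_div _ _
      rw [hqe] at this
      exact this
    -- conditional Hölder for g
    have hholg : ∀ᵐ x ∂μ, (μ[fun x => abs (g x)|ℱ n]) x ≤
        (μ[fun x => |g x| ^ p₂ * ω₂ x|ℱ n]) x ^ (1/p₂)
          * (μ[fun y => ω₂ y ^ (-(1 / (p₂ - 1)))|ℱ n]) x ^ ((p₂ - 1)/p₂) := by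
      set φ : Ω → ℝ := fun x => |g x| * ω₂ x ^ (1/p₂) with hφ_def
      set ψ : Ω → ℝ := fun x => ω₂ x ^ (-(1/p₂)) with hψ_def
      have cφψ : (fun x => φ x * ψ x) = fun x => |g x| := by
        funext x
        rw [hφ_def, hψ_def]
        simp only
        rw [mul_assoc, ← Real.rpow_add (hω₂ x)]
        simp
      have cφp : (fun x => φ x ^ p₂) = fun x => |g x| ^ p₂ * ω₂ x := by
        funext x
        rw [hφ_def]
        simp only
        rw [Real.mul_rpow (abs_nonneg _) (Real.rpow_nonneg (hω₂ x).le _),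
          ← Real.rpow_mul (hω₂ x).le, one_div_mul_cancel hp₂0.ne', Real.rpow_one]
      have cψq : (fun x => ψ x ^ (p₂ / (p₂ - 1))) = fun y => ω₂ y ^ (-(1 / (p₂ - 1))) := by
        funext x
        rw [hψ_def]
        simp only
        rw [← Real.rpow_mul (hω₂ x).le]
        congr 1
        field_simp
      have h1 : Integrable (fun x => φ x * ψ x) μ := by rw [cφψ]; exact hgI.abs
      have hIp : Integrable (fun x => φ x ^ p₂) μ := by rw [cφp]; exact hgω
      have hIq : Integrable (fun x => ψ x ^ (p₂ / (p₂ - 1))) μ := by rw [cψq]; exact hσ₂I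
      have hφ0 : ∀ x, 0 ≤ φ x := fun x => mul_nonneg (abs_nonneg _)
        (Real.rpow_nonneg (hω₂ x).le _)
      have hψ0 : ∀ x, 0 ≤ ψ x := fun x => Real.rpow_nonneg (hω₂ x).le _
      have := condexp_holder (m0 := m0) (m := ℱ n) (μ := μ) (φ := φ) (ψ := ψ) hm hq₂ hφ0 hψ0 h1 hIp hIq
      rw [cφψ, cφp, cψq] at this
      have hqe : 1 / (p₂ / (p₂ - 1)) = (p₂ - 1) / p₂ := one_div_div _ _
      rw [hqe] at this
      exact this
    -- key identities
    have hkeyf : (fun x => (ν[fun y => |f y| ^ p₁ * ω₁ y / v y|ℱ n]) x * (μ[v|ℱ n]) x)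
        =ᵐ[μ] μ[fun x => |f x| ^ p₁ * ω₁ x|ℱ n] := by
      have := condexp_withDensity_mul (H := fun y => |f y| ^ p₁ * ω₁ y) hm hv hvI hfω
      exact this
    have hkeyg : (fun x => (ν[fun y => |g y| ^ p₂ * ω₂ y / v y|ℱ n]) x * (μ[v|ℱ n]) x)
        =ᵐ[μ] μ[fun x => |g x| ^ p₂ * ω₂ x|ℱ n] := by
      have := condexp_withDensity_mul (H := fun y => |g y| ^ p₂ * ω₂ y) hm hv hvI hgω
      exact this
    have hVpos : ∀ᵐ x ∂μ, 0 < (μ[v|ℱ n]) x := condexp_pos_ae hm hv hvI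
    have hS₁nn : ∀ᵐ x ∂μ, 0 ≤ (μ[fun y => ω₁ y ^ (-(1 / (p₁ - 1)))|ℱ n]) x :=
      condExp_nonneg (Eventually.of_forall fun x => Real.rpow_nonneg (hω₁ x).le _)
    have hS₂nn : ∀ᵐ x ∂μ, 0 ≤ (μ[fun y => ω₂ y ^ (-(1 / (p₂ - 1)))|ℱ n]) x :=
      condExp_nonneg (Eventually.of_forall fun x => Real.rpow_nonneg (hω₂ x).le _)
    have hAnnf : ∀ᵐ x ∂μ, 0 ≤ (μ[fun x => |f x| ^ p₁ * ω₁ x|ℱ n]) x :=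
      condExp_nonneg (Eventually.of_forall fun x =>
        mul_nonneg (Real.rpow_nonneg (abs_nonneg _) _) (hω₁ x).le)
    have hAnng : ∀ᵐ x ∂μ, 0 ≤ (μ[fun x => |g x| ^ p₂ * ω₂ x|ℱ n]) x :=
      condExp_nonneg (Eventually.of_forall fun x =>
        mul_nonneg (Real.rpow_nonneg (abs_nonneg _) _) (hω₂ x).le)
    filter_upwards [habsf, habsg, hholf, hholg, hkeyf, hkeyg, hVpos, hS₁nn, hS₂nn,
      hAnnf, hAnng, hA n] with x h1 h2 h3 h4 h5 h6 h7 h8 h9 h10 h11 h12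
    have hFnn : 0 ≤ (ν[fun y => |f y| ^ p₁ * ω₁ y / v y|ℱ n]) x := by
      have := h10; rw [← h5] at this
      exact (mul_nonneg_iff_of_pos_right h7).mp this
    have hGnn : 0 ≤ (ν[fun y => |g y| ^ p₂ * ω₂ y / v y|ℱ n]) x := by
      have := h11; rw [← h6] at this
      exact (mul_nonneg_iff_of_pos_right h7).mp this
    refine ⟨?_, hFnn, hGnn⟩
    exact final_calc hp h7 h8 h9 hFnn hGnn h5 h6 (h1.trans h3) (h2.trans h4) h12
  -- combine over all n
  filter_upwards [ae_all_iff.2 hmain] with x hx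
  refine iSup_le fun n => ?_
  obtain ⟨hle, hF, hG⟩ := hx n
  have hsupF : ENNReal.ofReal ((ν[fun y => |f y| ^ p₁ * ω₁ y / v y|ℱ n]) x)
      ≤ ⨆ k, ENNReal.ofReal |(ν[fun y => |f y| ^ p₁ * ω₁ y / v y|ℱ k]) x| := by
    rw [← abs_of_nonneg hF]
    exact le_iSup (fun k => ENNReal.ofReal |(ν[fun y => |f y| ^ p₁ * ω₁ y / v y|ℱ k]) x|) n
  have hsupG : ENNReal.ofReal ((ν[fun y => |g y| ^ p₂ * ω₂ y / v y|ℱ n]) x)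
      ≤ ⨆ k, ENNReal.ofReal |(ν[fun y => |g y| ^ p₂ * ω₂ y / v y|ℱ k]) x| := by
    rw [← abs_of_nonneg hG]
    exact le_iSup (fun k => ENNReal.ofReal |(ν[fun y => |g y| ^ p₂ * ω₂ y / v y|ℱ k]) x|) n
  calc ENNReal.ofReal (|(μ[f|ℱ n]) x| * |(μ[g|ℱ n]) x|)
      ≤ ENNReal.ofReal (C * ((ν[fun y => |f y| ^ p₁ * ω₁ y / v y|ℱ n]) x) ^ (1/p₁)
          * ((ν[fun y => |g y| ^ p₂ * ω₂ y / v y|ℱ n]) x) ^ (1/p₂)) :=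
        ENNReal.ofReal_le_ofReal hle
    _ = ENNReal.ofReal C
        * ENNReal.ofReal (((ν[fun y => |f y| ^ p₁ * ω₁ y / v y|ℱ n]) x) ^ (1/p₁))
        * ENNReal.ofReal (((ν[fun y => |g y| ^ p₂ * ω₂ y / v y|ℱ n]) x) ^ (1/p₂)) := by
        rw [ENNReal.ofReal_mul (by positivity), ENNReal.ofReal_mul hC.le]
    _ = ENNReal.ofReal C
        * (ENNReal.ofReal ((ν[fun y => |f y| ^ p₁ * ω₁ y / v y|ℱ n]) x)) ^ (1/p₁)
        * (ENNReal.ofReal ((ν[fun y => |g y| ^ p₂ * ω₂ y / v y|ℱ n]) x)) ^ (1/p₂) := by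
        rw [ENNReal.ofReal_rpow_of_nonneg hF (by positivity),
          ENNReal.ofReal_rpow_of_nonneg hG (by positivity)]
    _ ≤ ENNReal.ofReal C
        * (⨆ k, ENNReal.ofReal |(ν[fun y => |f y| ^ p₁ * ω₁ y / v y|ℱ k]) x|) ^ (1/p₁)
        * (⨆ k, ENNReal.ofReal |(ν[fun y => |g y| ^ p₂ * ω₂ y / v y|ℱ k]) x|) ^ (1/p₂) := by
        exact mul_le_mul' (mul_le_mul' le_rfl
          (ENNReal.rpow_le_rpow hsupF (by positivity)))
          (ENNReal.rpow_le_rpow hsupG (by positivity))
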